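/- Let ξ₁,…,ξ_k be finite point patterns on a metric space, C > 0, p ≥ 1, and consider minimizing the Fréchet functional F(ζ) = Σ_{j=1}^k τ_{C,p}(ξⱼ, ζ)^p over finite point patterns ζ, where τ is the TT-metric. If ζ is a pattern in which some point z ∈ ζ is matched (in the optimal matchings realizing τ(ξⱼ,ζ) for each j) with at most ⌊k/2⌋ data points located in X, then removing z from ζ does not increase F. Consequently, there exists a minimizer ζ* of F with cardinality at most ⌊(2/(k+1))·Σ_{j=1}^k |ξⱼ|⌋. -/
import Mathlib


/-- `p`-th power of the transport-transform distance between finite point patterns. -/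
noncomputable def ttP {X : Type*} [MetricSpace X] (C p : ℝ) (ξ η : Multiset X) : ℝ :=
  sInf { c : ℝ | ∃ γ : Multiset (X × X),
    γ.map Prod.fst ≤ ξ ∧ γ.map Prod.snd ≤ η ∧
    c = ((Multiset.card ξ : ℝ) + Multiset.card η - 2 * Multiset.card γ) * C ^ p
        + (γ.map (fun z => dist z.1 z.2 ^ p)).sum }

namespace TTPAux

variable {X : Type*} [MetricSpace X] [DecidableEq X]

/-- cost of a matching -/
noncomputable def cost (C p : ℝ) (ξ η : Multiset X) (γ : Multiset (X × X)) : ℝ :=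
  ((Multiset.card ξ : ℝ) + Multiset.card η - 2 * Multiset.card γ) * C ^ p
    + (γ.map (fun z => dist z.1 z.2 ^ p)).sum

def S (C p : ℝ) (ξ η : Multiset X) : Set ℝ :=
  { c : ℝ | ∃ γ : Multiset (X × X),
    γ.map Prod.fst ≤ ξ ∧ γ.map Prod.snd ≤ η ∧ c = cost C p ξ η γ }

lemma ttP_eq (C p : ℝ) (ξ η : Multiset X) : ttP C p ξ η = sInf (S C p ξ η) := rfl

lemma cost_nonneg {C p : ℝ} (hC : 0 < C) {ξ η : Multiset X} {γ : Multiset (X × X)}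
    (h1 : γ.map Prod.fst ≤ ξ) (h2 : γ.map Prod.snd ≤ η) : 0 ≤ cost C p ξ η γ := by
  have hc1 : Multiset.card γ ≤ Multiset.card ξ := by
    simpa using Multiset.card_le_card h1
  have hc2 : Multiset.card γ ≤ Multiset.card η := by
    simpa using Multiset.card_le_card h2
  have hc1' : (Multiset.card γ : ℝ) ≤ Multiset.card ξ := by exact_mod_cast hc1
  have hc2' : (Multiset.card γ : ℝ) ≤ Multiset.card η := by exact_mod_cast hc2
  have hCp : (0:ℝ) < C ^ p := Real.rpow_pos_of_pos hC p
  have hsum : 0 ≤ (γ.map (fun z => dist z.1 z.2 ^ p)).sum := by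
    apply Multiset.sum_nonneg
    intro x hx
    obtain ⟨w, _, rfl⟩ := Multiset.mem_map.1 hx
    exact Real.rpow_nonneg dist_nonneg p
  have : (0:ℝ) ≤ ((Multiset.card ξ : ℝ) + Multiset.card η - 2 * Multiset.card γ) := by linarith
  unfold cost
  nlinarith

lemma bddBelow_S {C p : ℝ} (hC : 0 < C) (ξ η : Multiset X) : BddBelow (S C p ξ η) := by
  refine ⟨0, ?_⟩
  rintro c ⟨γ, h1, h2, rfl⟩
  exact cost_nonneg hC h1 h2

lemma ttP_le {C p : ℝ} (hC : 0 < C) {ξ η : Multiset X} {γ : Multiset (X × X)}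
    (h1 : γ.map Prod.fst ≤ ξ) (h2 : γ.map Prod.snd ≤ η) :
    ttP C p ξ η ≤ cost C p ξ η γ := by
  rw [ttP_eq]
  exact csInf_le (bddBelow_S hC ξ η) ⟨γ, h1, h2, rfl⟩

lemma S_nonempty (C p : ℝ) (ξ η : Multiset X) : (S C p ξ η).Nonempty :=
  ⟨cost C p ξ η 0, 0, by simp, by simp, rfl⟩

lemma S_finite (C p : ℝ) (ξ η : Multiset X) : (S C p ξ η).Finite := by
  have hsub : S C p ξ η ⊆ (cost C p ξ η) ''
      (((Multiset.card ξ • (ξ.toFinset ×ˢ η.toFinset).val).powerset.toFinset :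
        Finset (Multiset (X × X))) : Set (Multiset (X × X))) := by
    rintro c ⟨γ, h1, h2, rfl⟩
    refine ⟨γ, ?_, rfl⟩
    simp only [Finset.mem_coe, Multiset.mem_toFinset, Multiset.mem_powerset]
    rw [Multiset.le_iff_count]
    intro w
    by_cases hw : w ∈ γ
    · have hw1 : w.1 ∈ ξ := Multiset.mem_of_le h1 (Multiset.mem_map_of_mem _ hw)
      have hw2 : w.2 ∈ η := Multiset.mem_of_le h2 (Multiset.mem_map_of_mem _ hw)
      have hmem : w ∈ (ξ.toFinset ×ˢ η.toFinset).val := by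
        rw [Finset.mem_val]
        exact Finset.mem_product.2 ⟨Multiset.mem_toFinset.2 hw1, Multiset.mem_toFinset.2 hw2⟩
      have h1c : Multiset.count w ((ξ.toFinset ×ˢ η.toFinset).val) = 1 :=
        Multiset.count_eq_one_of_mem (Finset.nodup _) hmem
      rw [Multiset.count_nsmul, h1c, mul_one]
      calc Multiset.count w γ ≤ Multiset.card γ := Multiset.count_le_card _ _
        _ ≤ Multiset.card ξ := by simpa using Multiset.card_le_card h1
    · simp [Multiset.count_eq_zero.2 hw]
  exact (Set.Finite.image _ (Finset.finite_toSet _)).subset hsub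

lemma exists_opt (C p : ℝ) (ξ η : Multiset X) :
    ∃ γ : Multiset (X × X), γ.map Prod.fst ≤ ξ ∧ γ.map Prod.snd ≤ η ∧
      cost C p ξ η γ = ttP C p ξ η := by
  have h := (S_nonempty C p ξ η).csInf_mem (S_finite C p ξ η)
  rw [← ttP_eq] at h
  obtain ⟨γ, h1, h2, hc⟩ := h
  exact ⟨γ, h1, h2, hc.symm⟩

lemma card_erase_real {ζ : Multiset X} {z : X} (hz : z ∈ ζ) :
    ((Multiset.card (ζ.erase z)) : ℝ) = (Multiset.card ζ : ℝ) - 1 := by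
  rw [Multiset.card_erase_of_mem hz, Nat.pred_eq_sub_one]
  have h1 : 1 ≤ Multiset.card ζ := Multiset.card_pos.2 (by rintro rfl; simp at hz)
  push_cast [Nat.cast_sub h1]
  ring

lemma erase_le_of_not_full {C p : ℝ} (hC : 0 < C) {ξ ζ : Multiset X} {z : X}
    {γ : Multiset (X × X)} (hz : z ∈ ζ)
    (h1 : γ.map Prod.fst ≤ ξ) (h2 : γ.map Prod.snd ≤ ζ)
    (hcnt : Multiset.count z (γ.map Prod.snd) < Multiset.count z ζ) :
    ttP C p ξ (ζ.erase z) ≤ cost C p ξ ζ γ - C ^ p := by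
  have h2' : γ.map Prod.snd ≤ ζ.erase z := by
    rw [Multiset.le_iff_count]
    intro b
    rcases eq_or_ne b z with rfl | hb
    · rw [Multiset.count_erase_self]; omega
    · rw [Multiset.count_erase_of_ne hb]; exact Multiset.le_iff_count.1 h2 b
  refine (ttP_le hC h1 h2').trans (le_of_eq ?_)
  unfold cost
  rw [card_erase_real hz]
  ring

lemma erase_le_of_matched {C p : ℝ} (hC : 0 < C) {ξ ζ : Multiset X} {z : X}
    {γ : Multiset (X × X)}
    (h1 : γ.map Prod.fst ≤ ξ) (h2 : γ.map Prod.snd ≤ ζ)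
    (hz : z ∈ γ.map Prod.snd) :
    ttP C p ξ (ζ.erase z) ≤ cost C p ξ ζ γ + C ^ p := by
  obtain ⟨w, hwγ, hwz⟩ := Multiset.mem_map.1 hz
  have hzζ : z ∈ ζ := Multiset.mem_of_le h2 hz
  have hcons : γ = w ::ₘ γ.erase w := (Multiset.cons_erase hwγ).symm
  have hfst : (γ.erase w).map Prod.fst ≤ ξ :=
    le_trans (Multiset.map_le_map (Multiset.erase_le w γ)) h1
  have hsnd : (γ.erase w).map Prod.snd ≤ ζ.erase z := by
    have h3 : (γ.map Prod.snd).erase z ≤ ζ.erase z := Multiset.erase_le_erase z h2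
    have h4 : (γ.map Prod.snd).erase z = (γ.erase w).map Prod.snd := by
      conv_lhs => rw [hcons]
      rw [Multiset.map_cons, hwz, Multiset.erase_cons_head]
    rwa [h4] at h3
  refine (ttP_le hC hfst hsnd).trans ?_
  have hcardζ := card_erase_real hzζ
  have hcardγ : ((Multiset.card (γ.erase w)) : ℝ) = (Multiset.card γ : ℝ) - 1 := by
    rw [Multiset.card_erase_of_mem hwγ, Nat.pred_eq_sub_one]
    have h1' : 1 ≤ Multiset.card γ := Multiset.card_pos.2 (by rintro rfl; simp at hwγ)
    push_cast [Nat.cast_sub h1']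
    ring
  have hsum : (γ.map (fun w => dist w.1 w.2 ^ p)).sum
      = dist w.1 w.2 ^ p + ((γ.erase w).map (fun w => dist w.1 w.2 ^ p)).sum := by
    conv_lhs => rw [hcons]
    rw [Multiset.map_cons, Multiset.sum_cons]
  have hd : 0 ≤ dist w.1 w.2 ^ p := Real.rpow_nonneg dist_nonneg p
  unfold cost
  rw [hcardζ, hcardγ, hsum]
  have hrw : ((Multiset.card ξ : ℝ) + (Multiset.card ζ - 1) - 2 * (Multiset.card γ - 1)) * C ^ p
      = ((Multiset.card ξ : ℝ) + Multiset.card ζ - 2 * Multiset.card γ) * C ^ p + C ^ p := by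
    ring
  rw [hrw]
  linarith

lemma sum_bound {k : ℕ} (f g : Fin k → ℝ) (P : ℝ) (hP : 0 ≤ P) (Q : Fin k → Prop)
    [DecidablePred Q]
    (h : ∀ j, f j ≤ g j + (if Q j then P else -P))
    (hm : 2 * (Finset.univ.filter Q).card ≤ k) :
    ∑ j, f j ≤ ∑ j, g j := by
  have h1 : ∑ j, f j ≤ ∑ j, (g j + (if Q j then P else -P)) :=
    Finset.sum_le_sum (fun j _ => h j)
  rw [Finset.sum_add_distrib] at h1
  have h2 : ∑ j, (if Q j then P else -P) ≤ 0 := by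
    rw [Finset.sum_ite, Finset.sum_const, Finset.sum_const]
    have hcard : (Finset.univ.filter Q).card + (Finset.univ.filter (fun j => ¬ Q j)).card = k := by
      simpa using Finset.card_filter_add_card_filter_not (s := (Finset.univ : Finset (Fin k))) Q
    have hmm' : (Finset.univ.filter Q).card ≤ (Finset.univ.filter (fun j => ¬ Q j)).card := by omega
    have hmm'' : ((Finset.univ.filter Q).card : ℝ) ≤ (Finset.univ.filter (fun j => ¬ Q j)).card :=
      Nat.cast_le.2 hmm'
    simp only [nsmul_eq_mul, smul_neg, smul_eq_mul, mul_neg]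
    nlinarith
  linarith

end TTPAux

open TTPAux in
open Classical in
/-- In the Fréchet functional `F(ζ) = Σⱼ τ(ξⱼ,ζ)^p`: a center point matched (in optimal
matchings) with at most `⌊k/2⌋` data points can be removed without increasing `F`;
consequently some minimizer has at most `⌊2/(k+1)·Σⱼ|ξⱼ|⌋` points. -/
theorem stmt11 {X : Type*} [MetricSpace X] [DecidableEq X] (C p : ℝ) (hC : 0 < C)
    (hp : 1 ≤ p) (k : ℕ) (hk : 0 < k) (ξ : Fin k → Multiset X) :
    (∀ (ζ : Multiset X) (z : X), z ∈ ζ →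
      ∀ γ : Fin k → Multiset (X × X),
      (∀ j, (γ j).map Prod.fst ≤ ξ j ∧ (γ j).map Prod.snd ≤ ζ ∧
        ((Multiset.card (ξ j) : ℝ) + Multiset.card ζ - 2 * Multiset.card (γ j)) * C ^ p
          + ((γ j).map (fun w => dist w.1 w.2 ^ p)).sum = ttP C p (ξ j) ζ) →
      (Finset.univ.filter (fun j => z ∈ (γ j).map Prod.snd)).card ≤ k / 2 →
      ∑ j, ttP C p (ξ j) (ζ.erase z) ≤ ∑ j, ttP C p (ξ j) ζ) ∧
    ((∃ ζ₀ : Multiset X, ∀ ζ, ∑ j, ttP C p (ξ j) ζ₀ ≤ ∑ j, ttP C p (ξ j) ζ) →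
      ∃ ζs : Multiset X, (∀ ζ, ∑ j, ttP C p (ξ j) ζs ≤ ∑ j, ttP C p (ξ j) ζ) ∧
        Multiset.card ζs ≤ (2 * ∑ j, Multiset.card (ξ j)) / (k + 1)) := by
  have hCp : (0:ℝ) < C ^ p := Real.rpow_pos_of_pos hC p
  constructor
  · -- Part 1
    intro ζ z hz γ hγ hm
    have h2m : 2 * (Finset.univ.filter (fun j => z ∈ (γ j).map Prod.snd)).card ≤ k := by
      have := (Nat.le_div_iff_mul_le (by norm_num : 0 < 2)).1 hm
      omega
    refine sum_bound _ _ (C ^ p) hCp.le (fun j => z ∈ (γ j).map Prod.snd) ?_ h2m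
    intro j
    obtain ⟨h1, h2, h3⟩ := hγ j
    have hcost : cost C p (ξ j) ζ (γ j) = ttP C p (ξ j) ζ := h3
    by_cases hmem : z ∈ (γ j).map Prod.snd
    · rw [if_pos hmem]
      have := erase_le_of_matched (p := p) hC h1 h2 hmem
      rw [hcost] at this
      exact this
    · rw [if_neg hmem]
      have hcnt : Multiset.count z ((γ j).map Prod.snd) < Multiset.count z ζ := by
        rw [Multiset.count_eq_zero.2 hmem]
        exact Multiset.count_pos.2 hz
      have := erase_le_of_not_full (p := p) hC hz h1 h2 hcnt
      rw [hcost] at this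
      linarith
  · -- Part 2
    rintro ⟨ζ₀, hζ₀⟩
    have main : ∀ n (ζ₁ : Multiset X), Multiset.card ζ₁ = n →
        (∀ ζ, ∑ j, ttP C p (ξ j) ζ₁ ≤ ∑ j, ttP C p (ξ j) ζ) →
        ∃ ζs : Multiset X, (∀ ζ, ∑ j, ttP C p (ξ j) ζs ≤ ∑ j, ttP C p (ξ j) ζ) ∧
          Multiset.card ζs ≤ (2 * ∑ j, Multiset.card (ξ j)) / (k + 1) := by
      intro n
      induction n using Nat.strong_induction_on with
      | _ n IH =>
        intro ζ₁ hn hmin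
        choose γ h1 h2 h3 using fun j => exists_opt C p (ξ j) ζ₁
        by_cases hA : ∃ z ∈ ζ₁, 2 * (Finset.univ.filter
            (fun j => Multiset.count z ((γ j).map Prod.snd) = Multiset.count z ζ₁)).card ≤ k
        · obtain ⟨z, hz, hmz⟩ := hA
          have hdec : ∑ j, ttP C p (ξ j) (ζ₁.erase z) ≤ ∑ j, ttP C p (ξ j) ζ₁ := by
            refine sum_bound _ _ (C ^ p) hCp.le
              (fun j => Multiset.count z ((γ j).map Prod.snd) = Multiset.count z ζ₁) ?_ hmz
            intro j
            by_cases hfull : Multiset.count z ((γ j).map Prod.snd) = Multiset.count z ζ₁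
            · rw [if_pos hfull]
              have hmem : z ∈ (γ j).map Prod.snd := by
                rw [← Multiset.count_pos, hfull]
                exact Multiset.count_pos.2 hz
              have := erase_le_of_matched (p := p) hC (h1 j) (h2 j) hmem
              rw [h3 j] at this
              exact this
            · rw [if_neg hfull]
              have hcnt : Multiset.count z ((γ j).map Prod.snd) < Multiset.count z ζ₁ :=
                lt_of_le_of_ne (Multiset.count_le_of_le z (h2 j)) hfull
              have := erase_le_of_not_full (p := p) hC hz (h1 j) (h2 j) hcnt
              rw [h3 j] at this
              linarith
          have hlt : Multiset.card (ζ₁.erase z) < n := by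
            rw [Multiset.card_erase_of_mem hz, Nat.pred_eq_sub_one]
            have h1' : 1 ≤ Multiset.card ζ₁ := Multiset.card_pos.2 (by rintro rfl; simp at hz)
            omega
          exact IH _ hlt _ rfl (fun ζ => le_trans hdec (hmin ζ))
        · push_neg at hA
          refine ⟨ζ₁, hmin, ?_⟩
          rw [Nat.le_div_iff_mul_le (Nat.succ_pos k)]
          have step2 : ∀ j, ∑ z ∈ ζ₁.toFinset,
              (if Multiset.count z ((γ j).map Prod.snd) = Multiset.count z ζ₁
                then Multiset.count z ζ₁ else 0) ≤ Multiset.card (ξ j) := by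
            intro j
            have hle : ∑ z ∈ ζ₁.toFinset,
                (if Multiset.count z ((γ j).map Prod.snd) = Multiset.count z ζ₁
                  then Multiset.count z ζ₁ else 0)
                ≤ ∑ z ∈ ζ₁.toFinset, Multiset.count z ((γ j).map Prod.snd) := by
              refine Finset.sum_le_sum (fun z _ => ?_)
              split_ifs with h
              · omega
              · exact Nat.zero_le _
            have heq : ∑ z ∈ ζ₁.toFinset, Multiset.count z ((γ j).map Prod.snd)
                = Multiset.card ((γ j).map Prod.snd) := by
              rw [← Multiset.toFinset_sum_count_eq ((γ j).map Prod.snd)]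
              refine (Finset.sum_subset ?_ ?_).symm
              · exact Multiset.toFinset_subset.2 (Multiset.subset_of_le (h2 j))
              · intro x _ hx
                exact Multiset.count_eq_zero.2 (fun hmem => hx (Multiset.mem_toFinset.2 hmem))
            calc ∑ z ∈ ζ₁.toFinset,
                (if Multiset.count z ((γ j).map Prod.snd) = Multiset.count z ζ₁
                  then Multiset.count z ζ₁ else 0)
                ≤ Multiset.card ((γ j).map Prod.snd) := hle.trans heq.le
              _ = Multiset.card (γ j) := Multiset.card_map _ _
              _ ≤ Multiset.card (ξ j) := by simpa using Multiset.card_le_card (h1 j)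
          calc Multiset.card ζ₁ * (k + 1)
              = ∑ z ∈ ζ₁.toFinset, Multiset.count z ζ₁ * (k + 1) := by
                rw [← Finset.sum_mul, Multiset.toFinset_sum_count_eq]
            _ ≤ ∑ z ∈ ζ₁.toFinset, 2 * ∑ j, (if Multiset.count z ((γ j).map Prod.snd)
                  = Multiset.count z ζ₁ then Multiset.count z ζ₁ else 0) := by
                refine Finset.sum_le_sum (fun z hzT => ?_)
                have hz' : z ∈ ζ₁ := Multiset.mem_toFinset.1 hzT
                have hk1 : k + 1 ≤ 2 * (Finset.univ.filter
                    (fun j => Multiset.count z ((γ j).map Prod.snd)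
                      = Multiset.count z ζ₁)).card := hA z hz'
                have hsum : ∑ j, (if Multiset.count z ((γ j).map Prod.snd)
                      = Multiset.count z ζ₁ then Multiset.count z ζ₁ else 0)
                    = (Finset.univ.filter (fun j => Multiset.count z ((γ j).map Prod.snd)
                      = Multiset.count z ζ₁)).card * Multiset.count z ζ₁ := by
                  rw [Finset.sum_ite, Finset.sum_const, Finset.sum_const_zero, add_zero,
                    smul_eq_mul]
                rw [hsum]
                calc Multiset.count z ζ₁ * (k + 1)
                    ≤ Multiset.count z ζ₁ * (2 * (Finset.univ.filter
                      (fun j => Multiset.count z ((γ j).map Prod.snd)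
                        = Multiset.count z ζ₁)).card) := Nat.mul_le_mul_left _ hk1
                  _ = 2 * ((Finset.univ.filter (fun j => Multiset.count z ((γ j).map Prod.snd)
                        = Multiset.count z ζ₁)).card * Multiset.count z ζ₁) := by ring
            _ = 2 * ∑ j, ∑ z ∈ ζ₁.toFinset, (if Multiset.count z ((γ j).map Prod.snd)
                  = Multiset.count z ζ₁ then Multiset.count z ζ₁ else 0) := by
                rw [← Finset.mul_sum, Finset.sum_comm]
            _ ≤ 2 * ∑ j, Multiset.card (ξ j) :=
                Nat.mul_le_mul_left _ (Finset.sum_le_sum (fun j _ => step2 j))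
    exact main (Multiset.card ζ₀) ζ₀ rfl hζ₀
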